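/- In the t-BMW algebra K_{n+1}, one has h_n f_{n-1} g_n = h_n f_{n-1} g_n e_n = h_n e_{n-1} g_{n-1}^{-1}. -/
import Mathlib


/-- In the t-BMW algebra `K_{n+1}`, one has
`h_n f_{n-1} g_n = h_n f_{n-1} g_n e_n = h_n e_{n-1} g_{n-1}⁻¹`. -/
theorem tBMW_reductions2_i {A : Type*} [Ring A]
    (gm gmInv gn hm hn em en fm : A)
    (hgmi : gm * gmInv = 1) (higm : gmInv * gm = 1)
    (hhf : hn * fm = hn * hm * en)
    (heg : en * gn = gn * en)
    (hhhg : hn * hm * gn = hn * gmInv)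
    (henh : en * hn = hn) (hhen : hn * en = hn)
    (hege : en * gmInv * en = en * em * gmInv)
    (hee : en * en = en) :
    hn * fm * gn = hn * fm * gn * en ∧ hn * fm * gn = hn * em * gmInv := by
  have key : hn * fm * gn = hn * gmInv * en := by
    calc hn * fm * gn = hn * hm * (en * gn) := by rw [hhf]; noncomm_ring
    _ = hn * hm * gn * en := by rw [heg]; noncomm_ring
    _ = hn * gmInv * en := by rw [hhhg]
  constructor
  · rw [key, mul_assoc (hn * gmInv) en en, hee]
  · calc hn * fm * gn = hn * en * (gmInv * en) := by rw [hhen, key]; noncomm_ring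
    _ = hn * (en * gmInv * en) := by noncomm_ring
    _ = hn * (en * em * gmInv) := by rw [hege]
    _ = hn * em * gmInv := by rw [← mul_assoc, ← mul_assoc, hhen]
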